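/- Let (G,ψ) be a Γ-gain graph and let H₁, H₂ be connected subgraphs of G such that H₁ ∩ H₂ is connected and has no fixed cut-vertex; set H = H₁ ∪ H₂. If H₁ is balanced, then ⟨H⟩ = ⟨H₂⟩; in particular, if H₂ is also balanced then H is balanced. -/

import Mathlib

open scoped Classical

namespace GR

/-- A finite directed multigraph with edge labels ("gains") in a group `Γ` and a
designated finite set of fixed vertices. -/
structure GainedGraph (V E Γ : Type) where
  tail : E → V
  head : E → V
  gain : E → Γ
  fixed : Finset V

variable {V E Γ : Type} [DecidableEq V] [DecidableEq E] [Fintype V] [Fintype E] [Group Γ]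

/-- A subgraph: a set of vertices and a set of edges whose endpoints lie in the vertex set. -/
structure Subgraph (G : GainedGraph V E Γ) where
  verts : Finset V
  edges : Finset E
  tail_mem : ∀ e ∈ edges, G.tail e ∈ verts
  head_mem : ∀ e ∈ edges, G.head e ∈ verts

namespace Subgraph

variable {G : GainedGraph V E Γ}

instance : Top (Subgraph G) :=
  ⟨⟨Finset.univ, Finset.univ, fun _ _ => Finset.mem_univ _, fun _ _ => Finset.mem_univ _⟩⟩

instance : LE (Subgraph G) :=
  ⟨fun H K => H.verts ⊆ K.verts ∧ H.edges ⊆ K.edges⟩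

def union (H K : Subgraph G) : Subgraph G where
  verts := H.verts ∪ K.verts
  edges := H.edges ∪ K.edges
  tail_mem e he := by
    rcases Finset.mem_union.1 he with h | h
    · exact Finset.mem_union_left _ (H.tail_mem e h)
    · exact Finset.mem_union_right _ (K.tail_mem e h)
  head_mem e he := by
    rcases Finset.mem_union.1 he with h | h
    · exact Finset.mem_union_left _ (H.head_mem e h)
    · exact Finset.mem_union_right _ (K.head_mem e h)

def inter (H K : Subgraph G) : Subgraph G where
  verts := H.verts ∩ K.verts
  edges := H.edges ∩ K.edges
  tail_mem e he := by
    rcases Finset.mem_inter.1 he with ⟨h1, h2⟩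
    exact Finset.mem_inter.2 ⟨H.tail_mem e h1, K.tail_mem e h2⟩
  head_mem e he := by
    rcases Finset.mem_inter.1 he with ⟨h1, h2⟩
    exact Finset.mem_inter.2 ⟨H.head_mem e h1, K.head_mem e h2⟩

/-- Delete a vertex together with all edges incident to it. -/
def deleteVertex (H : Subgraph G) (v : V) : Subgraph G where
  verts := H.verts.erase v
  edges := H.edges.filter fun e => G.tail e ≠ v ∧ G.head e ≠ v
  tail_mem e he := by
    rcases Finset.mem_filter.1 he with ⟨h1, h2, h3⟩
    exact Finset.mem_erase.2 ⟨h2, H.tail_mem e h1⟩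
  head_mem e he := by
    rcases Finset.mem_filter.1 he with ⟨h1, h2, h3⟩
    exact Finset.mem_erase.2 ⟨h3, H.head_mem e h1⟩

/-- Delete an edge. -/
def deleteEdge (H : Subgraph G) (f : E) : Subgraph G where
  verts := H.verts
  edges := H.edges.erase f
  tail_mem e he := H.tail_mem e (Finset.mem_of_mem_erase he)
  head_mem e he := H.head_mem e (Finset.mem_of_mem_erase he)

/-- Add an edge (together with its endpoints). -/
def addEdge (H : Subgraph G) (f : E) : Subgraph G where
  verts := insert (G.tail f) (insert (G.head f) H.verts)
  edges := insert f H.edges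
  tail_mem e he := by
    rcases Finset.mem_insert.1 he with rfl | h
    · exact Finset.mem_insert_self _ _
    · exact Finset.mem_insert_of_mem (Finset.mem_insert_of_mem (H.tail_mem e h))
  head_mem e he := by
    rcases Finset.mem_insert.1 he with rfl | h
    · exact Finset.mem_insert_of_mem (Finset.mem_insert_self _ _)
    · exact Finset.mem_insert_of_mem (Finset.mem_insert_of_mem (H.head_mem e h))

/-- The free vertices of a subgraph. -/
def freeVerts (H : Subgraph G) : Finset V := H.verts \ G.fixed

/-- The fixed vertices of a subgraph. -/
def fixedVerts (H : Subgraph G) : Finset V := H.verts ∩ G.fixed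

end Subgraph

/-- The starting vertex of an oriented traversal of an edge. -/
def stepStart (G : GainedGraph V E Γ) (s : E × Bool) : V :=
  if s.2 then G.tail s.1 else G.head s.1

/-- The ending vertex of an oriented traversal of an edge. -/
def stepEnd (G : GainedGraph V E Γ) (s : E × Bool) : V :=
  if s.2 then G.head s.1 else G.tail s.1

/-- The gain contributed by an oriented traversal of an edge. -/
def stepGain (G : GainedGraph V E Γ) (s : E × Bool) : Γ :=
  if s.2 then G.gain s.1 else (G.gain s.1)⁻¹

/-- `IsWalk G H L u w` : `L` is a walk in the subgraph `H` from `u` to `w`. -/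
def IsWalk (G : GainedGraph V E Γ) (H : Subgraph G) : List (E × Bool) → V → V → Prop
  | [], u, w => u = w ∧ u ∈ H.verts
  | s :: L, u, w => s.1 ∈ H.edges ∧ stepStart G s = u ∧ IsWalk G H L (stepEnd G s) w

/-- The gain of a walk. -/
def walkGain (G : GainedGraph V E Γ) (L : List (E × Bool)) : Γ :=
  (L.map (stepGain G)).prod

/-- The vertices visited by a walk starting at `u`. -/
def walkVerts (G : GainedGraph V E Γ) (u : V) (L : List (E × Bool)) : List V :=
  u :: L.map (stepEnd G)

/-- `⟨H⟩` : the subgroup of `Γ` generated by the gains of all closed walks in `H`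
containing no fixed vertex. -/
def gainGroup (G : GainedGraph V E Γ) (H : Subgraph G) : Subgroup Γ :=
  Subgroup.closure
    {g | ∃ u L, IsWalk G H L u u ∧ (∀ x ∈ walkVerts G u L, x ∉ G.fixed) ∧ walkGain G L = g}

/-- A subgraph is balanced if its gain group is trivial. -/
def Balanced (G : GainedGraph V E Γ) (H : Subgraph G) : Prop := gainGroup G H = ⊥

def Reachable (G : GainedGraph V E Γ) (H : Subgraph G) (u w : V) : Prop :=
  ∃ L, IsWalk G H L u w

def Connected (G : GainedGraph V E Γ) (H : Subgraph G) : Prop :=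
  H.verts.Nonempty ∧ ∀ u ∈ H.verts, ∀ w ∈ H.verts, Reachable G H u w

/-- `v` is a cut-vertex of the subgraph `H`. -/
def IsCutVertex (G : GainedGraph V E Γ) (H : Subgraph G) (v : V) : Prop :=
  v ∈ H.verts ∧ ∃ u ∈ H.verts, ∃ w ∈ H.verts, u ≠ v ∧ w ≠ v ∧
    Reachable G H u w ∧ ¬ Reachable G (H.deleteVertex v) u w

/-- `(2,m,l)`-sparsity of the subgraph `K`. -/
def Sparse (G : GainedGraph V E Γ) (m l : ℤ) (K : Subgraph G) : Prop :=
  ∀ H : Subgraph G, H ≤ K → H.edges.Nonempty →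
    (H.edges.card : ℤ) ≤ 2 * (H.freeVerts.card : ℤ) + m * (H.fixedVerts.card : ℤ) - l

/-- `(2,m,l)`-tightness of the subgraph `K`. -/
def Tight (G : GainedGraph V E Γ) (m l : ℤ) (K : Subgraph G) : Prop :=
  Sparse G m l K ∧
    (K.edges.card : ℤ) = 2 * (K.freeVerts.card : ℤ) + m * (K.fixedVerts.card : ℤ) - l

/-- `(2,m,3,l)`-gain-tightness: `(2,m,l)`-tight and every balanced subgraph with a
nonempty edge set is `(2,3)`-sparse. -/
def GainTight23 (G : GainedGraph V E Γ) (m l : ℤ) (K : Subgraph G) : Prop :=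
  Tight G m l K ∧ ∀ H : Subgraph G, H ≤ K → H.edges.Nonempty → Balanced G H →
    (H.edges.card : ℤ) ≤ 2 * (H.verts.card : ℤ) - 3

/-- The subgraph has no fixed vertex. -/
def NoFixed (G : GainedGraph V E Γ) (H : Subgraph G) : Prop :=
  ∀ x ∈ H.verts, x ∉ G.fixed

/-- Near-balanced with base vertex `v` and gain `δ`: unbalanced, and every closed
walk starting at `v` not containing `v` as an internal vertex has gain `1`, `δ` or `δ⁻¹`. -/
def NearBalancedAt (G : GainedGraph V E Γ) (H : Subgraph G) (v : V) (δ : Γ) : Prop :=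
  ¬ Balanced G H ∧ ∀ L, IsWalk G H L v v →
    (∀ x ∈ (L.map (stepEnd G)).dropLast, x ≠ v) → walkGain G L ∈ ({1, δ, δ⁻¹} : Set Γ)

def NearBalanced (G : GainedGraph V E Γ) (H : Subgraph G) : Prop :=
  NoFixed G H ∧ ∃ v ∈ H.verts, ∃ δ : Γ, NearBalancedAt G H v δ

/-- The gain group of `H` is isomorphic to `ℤ_n`. -/
def IsZIso (G : GainedGraph V E Γ) (H : Subgraph G) (n : ℕ) : Prop :=
  Nonempty (gainGroup G H ≃* Multiplicative (ZMod n))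

def ProperNearBalanced (G : GainedGraph V E Γ) (H : Subgraph G) : Prop :=
  NearBalanced G H ∧ ¬ IsZIso G H 2 ∧ ¬ IsZIso G H 3

/-- The set `S_i(k,j)`. -/
def SSet (k j : ℕ) (i : ℤ) : Set ℕ :=
  {n | 2 ≤ n ∧ n ∣ k ∧ (Odd j → n ≠ 2) ∧ ((j : ZMod n) = (i : ZMod n))}

/-- `H` is `S_i(k,j)`. -/
def IsS (G : GainedGraph V E Γ) (k j : ℕ) (i : ℤ) (H : Subgraph G) : Prop :=
  ∃ n ∈ SSet k j i, IsZIso G H n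

/-- `H` is `S_{±1}(k,j)`. -/
def IsSpm (G : GainedGraph V E Γ) (k j : ℕ) (H : Subgraph G) : Prop :=
  IsS G k j (-1) H ∨ IsS G k j 1 H

/-- The function `α_k^j` on (connected) subgraphs. -/
noncomputable def alpha (G : GainedGraph V E Γ) (k j : ℕ) (X : Subgraph G) : ℤ :=
  if Balanced G X then 0
  else if Odd j ∧ IsZIso G X 2 then 1
  else if IsSpm G k j X then 2 - (X.fixedVerts.card : ℤ)
  else if IsS G k j 0 X ∨ (X.fixedVerts.card = 0 ∧ ProperNearBalanced G X) then
    2 - 2 * (X.fixedVerts.card : ℤ)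
  else 3 - 2 * (X.fixedVerts.card : ℤ)

/-- The subgraph spanned by a set of edges. -/
def edgeSpan (G : GainedGraph V E Γ) (F : Finset E) : Subgraph G where
  verts := F.image G.tail ∪ F.image G.head
  edges := F
  tail_mem e he := Finset.mem_union_left _ (Finset.mem_image_of_mem _ he)
  head_mem e he := Finset.mem_union_right _ (Finset.mem_image_of_mem _ he)

/-- The connected component of the edge `e` in the subgraph spanned by `F`. -/
noncomputable def componentOf (G : GainedGraph V E Γ) (F : Finset E) (e : E) : Subgraph G :=
  edgeSpan G (F.filter fun f => Reachable G (edgeSpan G F) (G.tail e) (G.tail f))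

/-- The connected components of the edge set `F`. -/
noncomputable def components (G : GainedGraph V E Γ) (F : Finset E) : Finset (Subgraph G) :=
  F.image (componentOf G F)

/-- The count `f_k^j(F) = Σ_{X ∈ C(F)} (2|V(X)| − 3 + α_k^j(X))`. -/
noncomputable def fCount (G : GainedGraph V E Γ) (k j : ℕ) (F : Finset E) : ℤ :=
  ∑ X ∈ components G F, (2 * (X.verts.card : ℤ) - 3 + alpha G k j X)

/-- `ℤ_k^j`-gain sparsity. -/
def GainSparseKJ (G : GainedGraph V E Γ) (k j : ℕ) (K : Subgraph G) : Prop :=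
  ∀ H : Subgraph G, H ≤ K → H.edges.Nonempty → (H.edges.card : ℤ) ≤ fCount G k j H.edges

/-- `ℤ_k^j`-gain tightness. -/
def GainTightKJ (G : GainedGraph V E Γ) (k j : ℕ) (K : Subgraph G) : Prop :=
  GainSparseKJ G k j K ∧ (K.edges.card : ℤ) = fCount G k j K.edges

/-- The degree of a vertex in a subgraph (a loop counts twice). -/
def degree (G : GainedGraph V E Γ) (K : Subgraph G) (v : V) : ℕ :=
  (K.edges.filter fun e => G.tail e = v).card + (K.edges.filter fun e => G.head e = v).card

def HasLoopAt (G : GainedGraph V E Γ) (K : Subgraph G) (v : V) : Prop :=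
  ∃ e ∈ K.edges, G.tail e = v ∧ G.head e = v

/-- The neighbours of a vertex in a subgraph. -/
def neighbors (G : GainedGraph V E Γ) (K : Subgraph G) (v : V) : Finset V :=
  ((K.edges.filter fun e => G.tail e = v).image G.head) ∪
    ((K.edges.filter fun e => G.head e = v).image G.tail)

/-- The subgraph `K` satisfies the axioms of a `Γ`-gain graph. -/
structure IsGainGraphOn (G : GainedGraph V E Γ) (K : Subgraph G) : Prop where
  fixed_card : K.fixedVerts.card ≤ 1
  same_dir : ∀ e ∈ K.edges, ∀ f ∈ K.edges, e ≠ f → G.tail e = G.tail f →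
    G.head e = G.head f → G.gain e ≠ G.gain f
  opp_dir : ∀ e ∈ K.edges, ∀ f ∈ K.edges, e ≠ f → G.tail e = G.head f →
    G.head e = G.tail f → G.gain e ≠ (G.gain f)⁻¹
  fixed_not_loop : ∀ e ∈ K.edges, G.tail e = G.head e → G.tail e ∉ G.fixed
  fixed_not_parallel : ∀ e ∈ K.edges, ∀ f ∈ K.edges, e ≠ f →
    (G.tail e ∈ G.fixed ∨ G.head e ∈ G.fixed) →
    ({G.tail e, G.head e} : Finset V) ≠ {G.tail f, G.head f}
  loop_gain : ∀ e ∈ K.edges, G.tail e = G.head e → G.gain e ≠ 1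

/-- `H` together with the vertex `v` and all edges of `G₀` incident to `v`. -/
def addVertexEdges (G : GainedGraph V E Γ) (G₀ H : Subgraph G) (v : V) : Subgraph G where
  verts := (H.verts ∪ {v}) ∪
    ((G₀.edges.filter fun e => G.tail e = v ∨ G.head e = v).image G.tail ∪
      (G₀.edges.filter fun e => G.tail e = v ∨ G.head e = v).image G.head)
  edges := H.edges ∪ G₀.edges.filter fun e => G.tail e = v ∨ G.head e = v
  tail_mem e he := by
    rcases Finset.mem_union.1 he with h | h
    · exact Finset.mem_union_left _ (Finset.mem_union_left _ (H.tail_mem e h))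
    · exact Finset.mem_union_right _ (Finset.mem_union_left _ (Finset.mem_image_of_mem _ h))
  head_mem e he := by
    rcases Finset.mem_union.1 he with h | h
    · exact Finset.mem_union_left _ (Finset.mem_union_left _ (H.head_mem e h))
    · exact Finset.mem_union_right _ (Finset.mem_union_right _ (Finset.mem_image_of_mem _ h))

/-- The result of a 1-reduction at `v` adding the edge `f`: delete `v` and all edges at
`v` and add the edge `f`. -/
def reduceAt (G : GainedGraph V E Γ) (G₀ : Subgraph G) (v : V) (f : E) : Subgraph G where
  verts := insert (G.tail f) (insert (G.head f) (G₀.verts.erase v))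
  edges := insert f (G₀.edges.filter fun e => G.tail e ≠ v ∧ G.head e ≠ v)
  tail_mem e he := by
    rcases Finset.mem_insert.1 he with rfl | h
    · exact Finset.mem_insert_self _ _
    · rcases Finset.mem_filter.1 h with ⟨h1, h2, h3⟩
      exact Finset.mem_insert_of_mem
        (Finset.mem_insert_of_mem (Finset.mem_erase.2 ⟨h2, G₀.tail_mem e h1⟩))
  head_mem e he := by
    rcases Finset.mem_insert.1 he with rfl | h
    · exact Finset.mem_insert_of_mem (Finset.mem_insert_self _ _)
    · rcases Finset.mem_filter.1 h with ⟨h1, h2, h3⟩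
      exact Finset.mem_insert_of_mem
        (Finset.mem_insert_of_mem (Finset.mem_erase.2 ⟨h3, G₀.head_mem e h1⟩))

/-- The new edge `f` arises from a 1-reduction at the vertex `v` of `G₀`: its endpoints are
joined to `v` by two distinct edges of `G₀` and its gain is the gain of the corresponding
path of length two through `v`. -/
def IsOneReduction (G : GainedGraph V E Γ) (G₀ : Subgraph G) (v : V) (f : E) : Prop :=
  f ∉ G₀.edges ∧ G.tail f ≠ v ∧ G.head f ≠ v ∧
    ∃ s₁ s₂ : E × Bool, s₁.1 ∈ G₀.edges ∧ s₂.1 ∈ G₀.edges ∧ s₁.1 ≠ s₂.1 ∧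
      stepEnd G s₁ = v ∧ stepStart G s₂ = v ∧
      G.tail f = stepStart G s₁ ∧ G.head f = stepEnd G s₂ ∧
      G.gain f = stepGain G s₁ * stepGain G s₂

/-- Two labelled edges coincide (up to reorientation with gain inversion). -/
def SameEdge (G : GainedGraph V E Γ) (e f : E) : Prop :=
  (G.tail e = G.tail f ∧ G.head e = G.head f ∧ G.gain e = G.gain f) ∨
    (G.tail e = G.head f ∧ G.head e = G.tail f ∧ G.gain e = (G.gain f)⁻¹)

/-- `H` is a blocker of the 1-reduction at `v` adding the edge `f`. -/
def IsBlocker (G : GainedGraph V E Γ) (k j : ℕ) (G₀ : Subgraph G) (v : V) (f : E)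
    (H : Subgraph G) : Prop :=
  H ≤ G₀ ∧ v ∉ H.verts ∧ G.tail f ∈ H.verts ∧ G.head f ∈ H.verts ∧ H.edges.Nonempty ∧
    Connected G (H.addEdge f) ∧
    (H.edges.card : ℤ) = 2 * (H.verts.card : ℤ) - 3 + alpha G k j (H.addEdge f)

/-- The graph `G` extended by one fresh edge `none` with tail `t`, head `h` and gain `g`. -/
def extendGraph (G : GainedGraph V E Γ) (t h : V) (g : Γ) : GainedGraph V (Option E) Γ where
  tail e := e.elim t G.tail
  head e := e.elim h G.head
  gain e := e.elim g G.gain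
  fixed := G.fixed

/-- The whole original graph `G`, viewed inside the extension. -/
def extendTop (G : GainedGraph V E Γ) (t h : V) (g : Γ) : Subgraph (extendGraph G t h g) where
  verts := Finset.univ
  edges := Finset.univ.image Option.some
  tail_mem _ _ := Finset.mem_univ _
  head_mem _ _ := Finset.mem_univ _

/-- There is an admissible 1-reduction at `v`, i.e. a choice of new edge (with
endpoints and gain coming from a path of length two through `v`) such that the
resulting `Γ`-gain graph is well defined and `ℤ_k^j`-gain tight. -/
def AdmissibleOneReductionExists (G : GainedGraph V E Γ) (k j : ℕ) (v : V) : Prop :=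
  ∃ t h : V, ∃ g : Γ,
    IsOneReduction (extendGraph G t h g) (extendTop G t h g) v none ∧
    IsGainGraphOn (extendGraph G t h g)
      (reduceAt (extendGraph G t h g) (extendTop G t h g) v none) ∧
    GainTightKJ (extendGraph G t h g) k j
      (reduceAt (extendGraph G t h g) (extendTop G t h g) v none)

end GR

namespace GR

set_option linter.unusedSectionVars false
set_option linter.unusedVariables false
set_option maxHeartbeats 1000000

section Helpers2

variable {V E : Type} [DecidableEq V] [DecidableEq E] [Fintype V] [Fintype E]
  {Γ : Type} [Group Γ]


variable {G : GainedGraph V E Γ}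

lemma stepStart_mem {H : Subgraph G} {s : E × Bool} (h : s.1 ∈ H.edges) :
    stepStart G s ∈ H.verts := by
  obtain ⟨e, b⟩ := s
  cases b
  · simpa [stepStart] using H.head_mem _ h
  · simpa [stepStart] using H.tail_mem _ h

lemma stepEnd_mem {H : Subgraph G} {s : E × Bool} (h : s.1 ∈ H.edges) :
    stepEnd G s ∈ H.verts := by
  obtain ⟨e, b⟩ := s
  cases b
  · simpa [stepEnd] using H.tail_mem _ h
  · simpa [stepEnd] using H.head_mem _ h

@[simp] lemma stepStart_flip (s : E × Bool) : stepStart G (s.1, !s.2) = stepEnd G s := by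
  obtain ⟨e, b⟩ := s; cases b <;> simp [stepStart, stepEnd]

@[simp] lemma stepEnd_flip (s : E × Bool) : stepEnd G (s.1, !s.2) = stepStart G s := by
  obtain ⟨e, b⟩ := s; cases b <;> simp [stepStart, stepEnd]

@[simp] lemma stepGain_flip (s : E × Bool) : stepGain G (s.1, !s.2) = (stepGain G s)⁻¹ := by
  obtain ⟨e, b⟩ := s; cases b <;> simp [stepGain]

lemma isWalk_verts {H : Subgraph G} : ∀ {L u w}, IsWalk G H L u w →
    ∀ x ∈ walkVerts G u L, x ∈ H.verts
  | [], u, w, h, x, hx => by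
    simp only [walkVerts, List.map_nil, List.mem_singleton] at hx
    subst hx; exact h.2
  | s :: L, u, w, h, x, hx => by
    simp only [walkVerts, List.map_cons, List.mem_cons] at hx
    rcases hx with rfl | hx
    · exact h.2.1 ▸ stepStart_mem h.1
    · exact isWalk_verts h.2.2 x (by simpa [walkVerts] using hx)

lemma isWalk_end_mem {H : Subgraph G} : ∀ {L u w}, IsWalk G H L u w → w ∈ H.verts
  | [], u, w, h => h.1 ▸ h.2
  | s :: L, u, w, h => isWalk_end_mem h.2.2

lemma isWalk_edges {H : Subgraph G} : ∀ {L u w}, IsWalk G H L u w →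
    ∀ t ∈ L, t.1 ∈ H.edges
  | [], _, _, _, t, ht => by simp at ht
  | s :: L, u, w, h, t, ht => by
    rcases List.mem_cons.1 ht with rfl | ht
    · exact h.1
    · exact isWalk_edges h.2.2 t ht

lemma isWalk_mono {H K : Subgraph G} (hv : H.verts ⊆ K.verts) (he : H.edges ⊆ K.edges) :
    ∀ {L u w}, IsWalk G H L u w → IsWalk G K L u w
  | [], u, w, h => ⟨h.1, hv h.2⟩
  | s :: L, u, w, h => ⟨he h.1, h.2.1, isWalk_mono hv he h.2.2⟩

lemma isWalk_append {H : Subgraph G} : ∀ {L₁ L₂ : List (E × Bool)} {u c w},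
    IsWalk G H L₁ u c → IsWalk G H L₂ c w → IsWalk G H (L₁ ++ L₂) u w
  | [], L₂, u, c, w, h₁, h₂ => by rcases h₁ with ⟨rfl, _⟩; simpa using h₂
  | s :: L₁, L₂, u, c, w, h₁, h₂ => ⟨h₁.1, h₁.2.1, isWalk_append h₁.2.2 h₂⟩

lemma isWalk_append_split {H : Subgraph G} : ∀ {L₁ L₂ : List (E × Bool)} {u w},
    IsWalk G H (L₁ ++ L₂) u w → ∃ c, IsWalk G H L₁ u c ∧ IsWalk G H L₂ c w
  | [], L₂, u, w, h => by
    refine ⟨u, ⟨rfl, ?_⟩, h⟩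
    cases L₂ with
    | nil => exact h.1 ▸ h.2
    | cons s L => exact h.2.1 ▸ stepStart_mem h.1
  | s :: L₁, L₂, u, w, h => by
    obtain ⟨c, hc1, hc2⟩ := isWalk_append_split h.2.2
    exact ⟨c, ⟨h.1, h.2.1, hc1⟩, hc2⟩

lemma walkGain_append (L₁ L₂ : List (E × Bool)) :
    walkGain G (L₁ ++ L₂) = walkGain G L₁ * walkGain G L₂ := by
  simp [walkGain]

def revWalk (L : List (E × Bool)) : List (E × Bool) :=
  (L.map fun s => (s.1, !s.2)).reverse

lemma walkGain_rev : ∀ L : List (E × Bool), walkGain G (revWalk L) = (walkGain G L)⁻¹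
  | [] => by simp [walkGain, revWalk]
  | s :: L => by
    have : revWalk (s :: L) = revWalk L ++ [(s.1, !s.2)] := by simp [revWalk]
    rw [this, walkGain_append, walkGain_rev L]
    simp [walkGain]

lemma isWalk_rev {H : Subgraph G} : ∀ {L u w}, IsWalk G H L u w →
    IsWalk G H (revWalk L) w u
  | [], u, w, h => ⟨h.1.symm, h.1 ▸ h.2⟩
  | s :: L, u, w, h => by
    have hrw : revWalk (s :: L) = revWalk L ++ [(s.1, !s.2)] := by simp [revWalk]
    rw [hrw]
    refine isWalk_append (isWalk_rev h.2.2) ⟨isWalk_edges h ⟨s.1, s.2⟩ (by simp), by simp, ?_, ?_⟩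
    · simp [h.2.1]
    · rw [stepEnd_flip]; exact stepStart_mem h.1

lemma walkVerts_rev_subset {H : Subgraph G} : ∀ {L u w}, IsWalk G H L u w →
    ∀ x ∈ walkVerts G w (revWalk L), x ∈ walkVerts G u L
  | [], u, w, h, x, hx => by
    simp only [walkVerts, revWalk, List.map_nil, List.reverse_nil] at hx ⊢
    simpa [← h.1] using hx
  | s :: L, u, w, h, x, hx => by
    have hrw : revWalk (s :: L) = revWalk L ++ [(s.1, !s.2)] := by simp [revWalk]
    rw [hrw] at hx
    simp only [walkVerts, List.map_append, List.map_cons, List.map_nil, List.mem_cons,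
      List.mem_append, List.mem_singleton] at hx ⊢
    rcases hx with rfl | hx | rfl | h'
    · -- x = w
      have := walkVerts_rev_subset h.2.2 x (by simp [walkVerts])
      simp only [walkVerts, List.mem_cons] at this
      tauto
    · have := walkVerts_rev_subset h.2.2 x (by simp [walkVerts, hx])
      simp only [walkVerts, List.mem_cons] at this
      tauto
    · left; rw [stepEnd_flip]; exact h.2.1
    · simp at h'

lemma balanced_gain {H : Subgraph G} (hbal : Balanced G H) {L u}
    (h : IsWalk G H L u u) (hav : ∀ x ∈ walkVerts G u L, x ∉ G.fixed) :
    walkGain G L = 1 := by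
  have : walkGain G L ∈ gainGroup G H :=
    Subgroup.subset_closure ⟨u, L, h, hav, rfl⟩
  rw [hbal, Subgroup.mem_bot] at this
  exact this

lemma gain_unique {H : Subgraph G} (hbal : Balanced G H) {L₁ L₂ a b}
    (h₁ : IsWalk G H L₁ a b) (hav₁ : ∀ x ∈ walkVerts G a L₁, x ∉ G.fixed)
    (h₂ : IsWalk G H L₂ a b) (hav₂ : ∀ x ∈ walkVerts G a L₂, x ∉ G.fixed) :
    walkGain G L₁ = walkGain G L₂ := by
  have hw : IsWalk G H (L₁ ++ revWalk L₂) a a := isWalk_append h₁ (isWalk_rev h₂)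
  have hav : ∀ x ∈ walkVerts G a (L₁ ++ revWalk L₂), x ∉ G.fixed := by
    intro x hx
    simp only [walkVerts, List.map_append, List.mem_cons, List.mem_append] at hx
    rcases hx with rfl | hx | hx
    · exact hav₁ x (by simp [walkVerts])
    · exact hav₁ x (by simp [walkVerts, hx])
    · have : x ∈ walkVerts G b (revWalk L₂) := by
        simp [walkVerts, hx]
      have := walkVerts_rev_subset h₂ x this
      exact hav₂ x this
  have := balanced_gain hbal hw hav
  rw [walkGain_append, walkGain_rev] at this
  exact mul_inv_eq_one.1 this

lemma isWalk_of_edges {H K : Subgraph G} : ∀ {L u w}, IsWalk G K L u w → L ≠ [] →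
    (∀ t ∈ L, t.1 ∈ H.edges) → IsWalk G H L u w
  | [], _, _, _, hne, _ => absurd rfl hne
  | s :: L, u, w, h, _, he => by
    refine ⟨he s (by simp), h.2.1, ?_⟩
    cases L with
    | nil => exact ⟨h.2.2.1, h.2.2.1 ▸ stepEnd_mem (he s (by simp))⟩
    | cons t L => exact isWalk_of_edges h.2.2 (by simp) fun t' ht' => he t' (by simp [ht'])



lemma isWalk_end_mem_walkVerts {G : GainedGraph V E Γ} {H : Subgraph G} :
    ∀ {L u w}, IsWalk G H L u w → w ∈ walkVerts G u L
  | [], u, w, h => by simp [walkVerts, h.1]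
  | s :: L, u, w, h => by
    have := isWalk_end_mem_walkVerts h.2.2
    simp only [walkVerts, List.mem_cons, List.map_cons] at this ⊢
    tauto

lemma exists_walk_avoid {G : GainedGraph V E Γ} {I : Subgraph G}
    (hfix : G.fixed.card ≤ 1)
    (hcI : Connected G I)
    (hcut : ∀ v ∈ G.fixed, ¬ IsCutVertex G I v)
    {a b : V} (ha : a ∈ I.verts) (hb : b ∈ I.verts)
    (hfa : a ∉ G.fixed) (hfb : b ∉ G.fixed) :
    ∃ L, IsWalk G I L a b ∧ ∀ x ∈ walkVerts G a L, x ∉ G.fixed := by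
  rcases G.fixed.eq_empty_or_nonempty with hemp | ⟨v, hv⟩
  · obtain ⟨L, hL⟩ := hcI.2 a ha b hb
    exact ⟨L, hL, fun x _ hx => by simp [hemp] at hx⟩
  · by_cases hvI : v ∈ I.verts
    · have hnc := hcut v hv
      rw [IsCutVertex] at hnc
      push_neg at hnc
      have hav : a ≠ v := fun h => hfa (h ▸ hv)
      have hbv : b ≠ v := fun h => hfb (h ▸ hv)
      obtain ⟨L, hL⟩ := hnc hvI a ha b hb hav hbv (hcI.2 a ha b hb)
      refine ⟨L, isWalk_mono (Finset.erase_subset _ _) (Finset.filter_subset _ _) hL,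
        fun x hx hxf => ?_⟩
      have hxv : x = v := Finset.card_le_one.1 hfix x hxf v hv
      have hx' : x ∈ (I.deleteVertex v).verts := isWalk_verts hL x hx
      simp only [Subgraph.deleteVertex, Finset.mem_erase] at hx'
      exact hx'.1 hxv
    · obtain ⟨L, hL⟩ := hcI.2 a ha b hb
      refine ⟨L, hL, fun x hx hxf => ?_⟩
      have : x = v := Finset.card_le_one.1 hfix x hxf v hv
      exact hvI (this ▸ isWalk_verts hL x hx)

end Helpers2

section Main

variable {V E : Type} [DecidableEq V] [DecidableEq E] [Fintype V] [Fintype E]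
  {Γ : Type} [CommGroup Γ] {G : GainedGraph V E Γ}

lemma replaceWalk {H₁ H₂ : Subgraph G} (hbal : Balanced G H₁)
    (hI : ∀ a b : V, a ∈ (H₁.inter H₂).verts → b ∈ (H₁.inter H₂).verts → a ∉ G.fixed →
      b ∉ G.fixed →
      ∃ P, IsWalk G (H₁.inter H₂) P a b ∧ ∀ x ∈ walkVerts G a P, x ∉ G.fixed) :
    ∀ (n : ℕ) (L : List (E × Bool)) (a b : V), L.length ≤ n →
      IsWalk G (H₁.union H₂) L a b → a ∈ H₂.verts → b ∈ H₂.verts →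
      (∀ x ∈ walkVerts G a L, x ∉ G.fixed) →
      ∃ L', IsWalk G H₂ L' a b ∧ (∀ x ∈ walkVerts G a L', x ∉ G.fixed) ∧
        walkGain G L' = walkGain G L := by
  have hIv1 : (H₁.inter H₂).verts ⊆ H₁.verts := Finset.inter_subset_left
  have hIv2 : (H₁.inter H₂).verts ⊆ H₂.verts := Finset.inter_subset_right
  have hIe1 : (H₁.inter H₂).edges ⊆ H₁.edges := Finset.inter_subset_left
  have hIe2 : (H₁.inter H₂).edges ⊆ H₂.edges := Finset.inter_subset_right
  intro n
  induction n with
  | zero =>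
    intro L a b hlen hw ha2 hb2 hav
    have hL : L = [] := List.length_eq_zero_iff.1 (Nat.le_zero.1 hlen)
    subst hL
    exact ⟨[], ⟨hw.1, ha2⟩, hav, rfl⟩
  | succ n IH =>
    intro L a b hlen hw ha2 hb2 hav
    cases L with
    | nil => exact ⟨[], ⟨hw.1, ha2⟩, hav, rfl⟩
    | cons s rest =>
      by_cases hs2 : s.1 ∈ H₂.edges
      · have hend2 : stepEnd G s ∈ H₂.verts := stepEnd_mem hs2
        have havr : ∀ x ∈ walkVerts G (stepEnd G s) rest, x ∉ G.fixed := by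
          intro x hx
          apply hav
          simp only [walkVerts, List.mem_cons, List.map_cons] at hx ⊢
          tauto
        obtain ⟨L', h1, h2, h3⟩ := IH rest (stepEnd G s) b
          (Nat.le_of_succ_le_succ hlen) hw.2.2 hend2 hb2 havr
        refine ⟨s :: L', ⟨hs2, hw.2.1, h1⟩, ?_, ?_⟩
        · intro x hx
          simp only [walkVerts, List.mem_cons, List.map_cons] at hx
          rcases hx with rfl | hx
          · exact hav x (by simp [walkVerts])
          · exact h2 x (by simpa [walkVerts] using hx)
        · simp only [walkGain, List.map_cons, List.prod_cons] at h3 ⊢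
          rw [h3]
      · set p : E × Bool → Bool := fun t => !decide (t.1 ∈ H₂.edges) with hp
        set R := (s :: rest).takeWhile p with hR
        set T := (s :: rest).dropWhile p with hT
        have hRT : R ++ T = s :: rest := List.takeWhile_append_dropWhile
        obtain ⟨c, hcR, hcT⟩ := isWalk_append_split (hRT ▸ hw)
        have hps : p s = true := by simp [hp, hs2]
        have hRne : R ≠ [] := by
          rw [hR, List.takeWhile_cons, hps]
          simp
        have hRsub : ∀ t ∈ R, t ∈ s :: rest := (List.takeWhile_sublist p).subset
        have hTsub : ∀ t ∈ T, t ∈ s :: rest := (List.dropWhile_sublist p).subset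
        have hRedges : ∀ t ∈ R, t.1 ∈ H₁.edges := by
          intro t ht
          have h1 : t.1 ∈ (H₁.union H₂).edges := isWalk_edges hw t (hRsub t ht)
          have h2 : ¬ t.1 ∈ H₂.edges := by
            have := List.mem_takeWhile_imp ht
            simpa [hp] using this
          rcases Finset.mem_union.1 h1 with h | h
          · exact h
          · exact absurd h h2
        have hwR : IsWalk G H₁ R a c := isWalk_of_edges hcR hRne hRedges
        have haH1 : a ∈ H₁.verts := isWalk_verts hwR a (by simp [walkVerts])
        have haI : a ∈ (H₁.inter H₂).verts := Finset.mem_inter.2 ⟨haH1, ha2⟩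
        have hcH1 : c ∈ H₁.verts := isWalk_end_mem hwR
        have havR : ∀ x ∈ walkVerts G a R, x ∉ G.fixed := by
          intro x hx
          apply hav
          simp only [walkVerts, List.mem_cons] at hx ⊢
          rcases hx with rfl | hx
          · left; rfl
          · right
            obtain ⟨t, ht, rfl⟩ := List.mem_map.1 hx
            exact List.mem_map.2 ⟨t, hRsub t ht, rfl⟩
        have hafix : a ∉ G.fixed := hav a (by simp [walkVerts])
        have hcmem : c ∈ walkVerts G a R := isWalk_end_mem_walkVerts hwR
        have hcfix : c ∉ G.fixed := havR c hcmem
        cases hTc : T with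
        | nil =>
          rw [hTc] at hcT hRT
          obtain ⟨rfl, -⟩ := hcT
          simp only [List.append_nil] at hRT
          have hbI : c ∈ (H₁.inter H₂).verts := Finset.mem_inter.2 ⟨hcH1, hb2⟩
          obtain ⟨P, hP, hPav⟩ := hI a c haI hbI hafix hcfix
          have hg : walkGain G P = walkGain G R :=
            gain_unique hbal (isWalk_mono hIv1 hIe1 hP) hPav hwR havR
          refine ⟨P, isWalk_mono hIv2 hIe2 hP, hPav, ?_⟩
          rw [hg, hRT]
        | cons d T' =>
          rw [hTc] at hcT hRT
          have hd2 : d.1 ∈ H₂.edges := by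
            have h := List.head?_dropWhile_not p (s :: rest)
            rw [← hT, hTc] at h
            simp only [List.head?_cons] at h
            simpa [hp] using h
          have hc2 : c ∈ H₂.verts := hcT.2.1 ▸ stepStart_mem hd2
          have hcI : c ∈ (H₁.inter H₂).verts := Finset.mem_inter.2 ⟨hcH1, hc2⟩
          obtain ⟨P, hP, hPav⟩ := hI a c haI hcI hafix hcfix
          have hg : walkGain G P = walkGain G R :=
            gain_unique hbal (isWalk_mono hIv1 hIe1 hP) hPav hwR havR
          have hlenT : (d :: T').length ≤ n := by
            have h1 : R.length + (d :: T').length = (s :: rest).length := by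
              rw [← hRT]; simp
            have h2 : 1 ≤ R.length := by
              cases hRe : R with
              | nil => exact absurd hRe hRne
              | cons _ _ => simp
            have h3 := hlen
            simp only [List.length_cons] at h3
            omega
          have havT : ∀ x ∈ walkVerts G c (d :: T'), x ∉ G.fixed := by
            intro x hx
            simp only [walkVerts, List.mem_cons] at hx
            rcases hx with rfl | hx
            · exact hcfix
            · apply hav
              simp only [walkVerts, List.mem_cons]
              right
              obtain ⟨t, ht, rfl⟩ := List.mem_map.1 hx
              exact List.mem_map.2 ⟨t, hTsub t (hTc ▸ ht), rfl⟩
          obtain ⟨T'', hT1, hT2, hT3⟩ := IH (d :: T') c b hlenT hcT hc2 hb2 havT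
          refine ⟨P ++ T'', isWalk_append (isWalk_mono hIv2 hIe2 hP) hT1, ?_, ?_⟩
          · intro x hx
            simp only [walkVerts, List.mem_cons, List.map_append, List.mem_append] at hx
            rcases hx with rfl | hx | hx
            · exact hafix
            · exact hPav x (by simp [walkVerts, hx])
            · exact hT2 x (by simp [walkVerts, hx])
          · rw [walkGain_append, hg, hT3, ← walkGain_append, hRT]

end Main

/-- If `H₁, H₂` are connected subgraphs of a `Γ`-gain graph such that
`H₁ ∩ H₂` is connected with no fixed cut-vertex, and `H₁` is balanced, then
`⟨H₁ ∪ H₂⟩ = ⟨H₂⟩`; in particular if `H₂` is also balanced then so is `H₁ ∪ H₂`. -/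
theorem union_with_balanced {V E : Type} [DecidableEq V] [DecidableEq E]
    [Fintype V] [Fintype E] (k : ℕ) (hk : 0 < k)
    (G : GainedGraph V E (Multiplicative (ZMod k)))
    (hG : IsGainGraphOn G (⊤ : Subgraph G))
    (H₁ H₂ : Subgraph G)
    (hc₁ : Connected G H₁) (hc₂ : Connected G H₂)
    (hcI : Connected G (H₁.inter H₂))
    (hcut : ∀ v ∈ G.fixed, ¬ IsCutVertex G (H₁.inter H₂) v)
    (hbal : Balanced G H₁) :
    gainGroup G (H₁.union H₂) = gainGroup G H₂ ∧
      (Balanced G H₂ → Balanced G (H₁.union H₂)) := by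
  classical
  have hfix : G.fixed.card ≤ 1 := by
    have h := hG.fixed_card
    simp only [Subgraph.fixedVerts] at h
    rwa [show (⊤ : Subgraph G).verts = Finset.univ from rfl, Finset.univ_inter] at h
  have hI : ∀ a b : V, a ∈ (H₁.inter H₂).verts → b ∈ (H₁.inter H₂).verts → a ∉ G.fixed →
      b ∉ G.fixed →
      ∃ P, IsWalk G (H₁.inter H₂) P a b ∧ ∀ x ∈ walkVerts G a P, x ∉ G.fixed :=
    fun a b ha hb hfa hfb => exists_walk_avoid hfix hcI hcut ha hb hfa hfb
  have key : gainGroup G (H₁.union H₂) = gainGroup G H₂ := by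
    apply le_antisymm
    · apply (Subgroup.closure_le _).2
      rintro g ⟨u, L, hw, hav, rfl⟩
      by_cases hex : ∀ t ∈ L, t.1 ∉ H₂.edges
      · cases hLe : L with
        | nil =>
          subst hLe
          simp only [walkGain, List.map_nil, List.prod_nil]
          exact one_mem _
        | cons s rest =>
          subst hLe
          have hedges : ∀ t ∈ s :: rest, t.1 ∈ H₁.edges := by
            intro t ht
            rcases Finset.mem_union.1 (isWalk_edges hw t ht) with h | h
            · exact h
            · exact absurd h (hex t ht)
          have hw1 : IsWalk G H₁ (s :: rest) u u := isWalk_of_edges hw (by simp) hedges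
          rw [balanced_gain hbal hw1 hav]
          exact one_mem _
      · push_neg at hex
        obtain ⟨t₀, ht₀, ht₀2⟩ := hex
        set p : E × Bool → Bool := fun t => !decide (t.1 ∈ H₂.edges) with hp
        set A := L.takeWhile p with hA
        set T := L.dropWhile p with hT
        have hAT : A ++ T = L := List.takeWhile_append_dropWhile
        cases hTc : T with
        | nil =>
          exfalso
          have h1 := List.dropWhile_eq_nil_iff.1 (hT ▸ hTc) t₀ ht₀
          simp [hp, ht₀2] at h1
        | cons d B =>
          obtain ⟨c, hcA, hcT⟩ := isWalk_append_split (hAT ▸ hw)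
          rw [hTc] at hcT
          have hd2 : d.1 ∈ H₂.edges := by
            have h := List.head?_dropWhile_not p L
            rw [← hT, hTc] at h
            simp only [List.head?_cons] at h
            simpa [hp] using h
          have hc2 : c ∈ H₂.verts := hcT.2.1 ▸ stepStart_mem hd2
          have hw' : IsWalk G (H₁.union H₂) ((d :: B) ++ A) c c := isWalk_append hcT hcA
          have hcmem : c ∈ walkVerts G u L := by
            have h1 : c ∈ walkVerts G u A := isWalk_end_mem_walkVerts hcA
            simp only [walkVerts, List.mem_cons] at h1 ⊢
            rcases h1 with rfl | h1
            · left; rfl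
            · right
              obtain ⟨t, ht, rfl⟩ := List.mem_map.1 h1
              exact List.mem_map.2 ⟨t, (List.takeWhile_sublist p).subset (hA ▸ ht), rfl⟩
          have hav' : ∀ x ∈ walkVerts G c ((d :: B) ++ A), x ∉ G.fixed := by
            intro x hx
            simp only [walkVerts, List.mem_cons, List.map_append, List.mem_append] at hx
            rcases hx with rfl | hx | hx
            · exact hav _ hcmem
            · apply hav
              simp only [walkVerts, List.mem_cons]
              right
              obtain ⟨t, ht, rfl⟩ := List.mem_map.1 hx
              refine List.mem_map.2 ⟨t, (List.dropWhile_sublist p).subset ?_, rfl⟩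
              rw [← hT, hTc]
              exact ht
            · apply hav
              simp only [walkVerts, List.mem_cons]
              right
              obtain ⟨t, ht, rfl⟩ := List.mem_map.1 hx
              exact List.mem_map.2 ⟨t, (List.takeWhile_sublist p).subset (hA ▸ ht), rfl⟩
          have hgain : walkGain G ((d :: B) ++ A) = walkGain G L := by
            have hADB : A ++ (d :: B) = L := by rw [← hTc]; exact hAT
            rw [walkGain_append, mul_comm, ← walkGain_append, hADB]
          obtain ⟨L'', hw'', hav'', hg''⟩ := replaceWalk hbal hI ((d :: B) ++ A).length
            ((d :: B) ++ A) c c le_rfl hw' hc2 hc2 hav'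
          exact Subgroup.subset_closure ⟨c, L'', hw'', hav'', by rw [hg'', hgain]⟩
    · apply (Subgroup.closure_le _).2
      rintro g ⟨u, L, hw, hav, rfl⟩
      exact Subgroup.subset_closure
        ⟨u, L, isWalk_mono Finset.subset_union_right Finset.subset_union_right hw, hav, rfl⟩
  refine ⟨key, fun h2 => ?_⟩
  show gainGroup G (H₁.union H₂) = ⊥
  rw [key]
  exact h2

end GR
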